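/- Suppose d ∈ [0,1), ω ∈ ℝ, g ≠ 0 and κ, γ > 0, and let (A, S, D) be a solution of the Maxwell–Bloch equations on [0,∞). Then for all t ≥ 0, |A(t)|² + (g²/(γκ))|S(t)|² + (g²/(4γκ))(D(t) − d)² ≤ exp( −t · min{ κ − g²d/γ, γ − g²d/κ } ) · ( |A(0)|² + (g²/(γκ))|S(0)|² + (g²/(4γκ))(D(0) − d)² ). -/

import Mathlib

private lemma hasDerivAt_abs_sq {f : ℝ → ℂ} {f' : ℂ} {t : ℝ} (hf : HasDerivAt f f' t) :
    HasDerivAt (fun s => ‖f s‖ ^ 2)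
      (2 * ((starRingEnd ℂ) (f t) * f').re) t := by
  have hre : HasDerivAt (fun s => (f s).re) f'.re t := by
    exact (Complex.reCLM.hasFDerivAt.comp_hasDerivAt t hf)
  have him : HasDerivAt (fun s => (f s).im) f'.im t := by
    exact (Complex.imCLM.hasFDerivAt.comp_hasDerivAt t hf)
  have h := (hre.mul hre).add (him.mul him)
  have heq : (fun s => ‖f s‖ ^ 2)
      = fun s => (f s).re * (f s).re + (f s).im * (f s).im := by
    funext s; simp [Complex.sq_norm, Complex.normSq_apply]
  have hval : 2 * ((starRingEnd ℂ) (f t) * f').re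
      = f'.re * (f t).re + (f t).re * f'.re + (f'.im * (f t).im + (f t).im * f'.im) := by
    simp [Complex.mul_re]; ring
  rw [heq, hval]; exact h

private lemma mb_prod1 (g κ γ d : ℝ) (hκ : 0 < κ) (hγ : 0 < γ) (hd0 : 0 ≤ d)
    (hmin : κ - g^2*d/γ ≤ γ - g^2*d/κ) :
    g^2*(1 + (g^2/(γ*κ))*d)^2
      ≤ (2*κ - (κ - g^2*d/γ)) * ((g^2/(γ*κ))*(2*γ - (κ - g^2*d/γ))) := by
  have hγ0 : γ ≠ 0 := ne_of_gt hγ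
  have hκ0 : κ ≠ 0 := ne_of_gt hκ
  have h1 : 0 ≤ (κ-γ)*(g^2*d - γ*κ) := by
    have h2 := mul_le_mul_of_nonneg_right hmin (le_of_lt (mul_pos hγ hκ))
    have e1 : (κ - g^2*d/γ)*(γ*κ) = κ*γ*κ - g^2*d*κ := by field_simp
    have e2 : (γ - g^2*d/κ)*(γ*κ) = γ*γ*κ - g^2*d*γ := by field_simp
    rw [e1, e2] at h2
    nlinarith [h2]
  have key : (2*κ - (κ - g^2*d/γ)) * ((g^2/(γ*κ))*(2*γ - (κ - g^2*d/γ)))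
        - g^2*(1 + (g^2/(γ*κ))*d)^2
      = g^2*(κ*γ + g^2*d)*((κ-γ)*(g^2*d - γ*κ))/(γ^3*κ^2) := by
    field_simp; ring
  have hnum : 0 ≤ g^2*(κ*γ + g^2*d)*((κ-γ)*(g^2*d - γ*κ)) := by
    apply mul_nonneg _ h1
    apply mul_nonneg (sq_nonneg g)
    nlinarith [mul_pos hκ hγ, mul_nonneg (sq_nonneg g) hd0]
  have hden : (0:ℝ) < γ^3*κ^2 := by positivity
  nlinarith [key, div_nonneg hnum (le_of_lt hden)]

private lemma amgm (p q u a2 s2 r : ℝ) (hp : 0 ≤ p) (hq : 0 ≤ q) (ha2 : 0 ≤ a2) (hs2 : 0 ≤ s2)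
    (hu : u^2 ≤ p*q) (hr : r^2 ≤ a2*s2) : 2*u*r ≤ p*a2 + q*s2 := by
  have hT : 0 ≤ p*a2 + q*s2 := by positivity
  have h1 : u^2*r^2 ≤ (p*q)*(a2*s2) :=
    mul_le_mul hu hr (sq_nonneg r) (le_trans (sq_nonneg u) hu)
  have h4 : (2*u*r)^2 ≤ (p*a2 + q*s2)^2 := by nlinarith [sq_nonneg (p*a2 - q*s2)]
  nlinarith [h4, hT]

private lemma mb_key (g κ γ d a2 s2 e r : ℝ) (hκ : 0 < κ) (hγ : 0 < γ) (hd0 : 0 ≤ d)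
    (ha2 : 0 ≤ a2) (hs2 : 0 ≤ s2) (hr : r ^ 2 ≤ a2 * s2) :
    (-(2*κ)*a2 - 2*γ*(g^2/(γ*κ))*s2 - γ*(g^2/(γ*κ))*e^2 + 2*(g*(1+(g^2/(γ*κ))*d))*r)
      + min (κ - g^2*d/γ) (γ - g^2*d/κ) * (a2 + (g^2/(γ*κ))*s2 + (g^2/(γ*κ))/4*e^2) ≤ 0 := by
  have hc : 0 ≤ g^2/(γ*κ) := by positivity
  have hdg : 0 ≤ g^2*d/γ := by positivity
  have hdk : 0 ≤ g^2*d/κ := by positivity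
  set m := min (κ - g^2*d/γ) (γ - g^2*d/κ) with hm
  have hl1 : m ≤ κ := le_trans (min_le_left _ _) (by linarith)
  have hl2 : m ≤ γ := le_trans (min_le_right _ _) (by linarith)
  have hprod : (g*(1+(g^2/(γ*κ))*d))^2 ≤ (2*κ - m) * ((g^2/(γ*κ))*(2*γ - m)) := by
    have hsq : (g*(1+(g^2/(γ*κ))*d))^2 = g^2*(1+(g^2/(γ*κ))*d)^2 := by ring
    rw [hsq]
    rcases min_cases (κ - g^2*d/γ) (γ - g^2*d/κ) with ⟨hmeq, hle⟩ | ⟨hmeq, hle⟩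
    · rw [hm, hmeq]; exact mb_prod1 g κ γ d hκ hγ hd0 hle
    · rw [hm, hmeq]
      have h := mb_prod1 g γ κ d hγ hκ hd0 (le_of_lt hle)
      calc g^2*(1+(g^2/(γ*κ))*d)^2 = g^2*(1 + (g^2/(κ*γ))*d)^2 := by ring
        _ ≤ (2*γ - (γ - g^2*d/κ)) * ((g^2/(κ*γ))*(2*κ - (γ - g^2*d/κ))) := h
        _ = (2*κ - (γ - g^2*d/κ)) * ((g^2/(γ*κ))*(2*γ - (γ - g^2*d/κ))) := by ring
  have hcross : 2*(g*(1+(g^2/(γ*κ))*d))*r ≤ (2*κ - m)*a2 + ((g^2/(γ*κ))*(2*γ - m))*s2 :=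
    amgm _ _ _ _ _ _ (by linarith) (mul_nonneg hc (by linarith)) ha2 hs2 hprod hr
  have hee : 0 ≤ (g^2/(γ*κ))*e^2*(4*γ - m) :=
    mul_nonneg (mul_nonneg hc (sq_nonneg e)) (by linarith)
  nlinarith [hcross, hee]

/-- **Lyapunov estimate for the Maxwell–Bloch equations with `0 ≤ d < 1`.**
For any solution `(A, S, D)` on `[0,∞)`,
`|A(t)|² + (g²/(γκ))|S(t)|² + (g²/(4γκ))(D(t) − d)²` decays at exponential rate
`min{κ − g²d/γ, γ − g²d/κ}`. -/
theorem maxwell_bloch_lyapunov_estimate_nonneg_d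
    (ω g κ γ d : ℝ) (hg : g ≠ 0) (hκ : 0 < κ) (hγ : 0 < γ)
    (hd0 : 0 ≤ d) (hd1 : d < 1)
    (A S : ℝ → ℂ) (D : ℝ → ℝ)
    (hA : ∀ t ≥ (0 : ℝ),
      HasDerivAt A (-((κ : ℂ) + (ω : ℂ) * Complex.I) * A t + (g : ℂ) * S t) t)
    (hS : ∀ t ≥ (0 : ℝ),
      HasDerivAt S (-((γ : ℂ) + (ω : ℂ) * Complex.I) * S t + (g : ℂ) * A t * (D t : ℂ)) t)
    (hD : ∀ t ≥ (0 : ℝ),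
      HasDerivAt D (-4 * g * ((starRingEnd ℂ) (A t) * S t).re - 2 * γ * (D t - d)) t) :
    ∀ t ≥ (0 : ℝ),
      ‖A t‖ ^ 2 + g ^ 2 / (γ * κ) * ‖S t‖ ^ 2 +
          g ^ 2 / (4 * γ * κ) * (D t - d) ^ 2 ≤
        Real.exp (-t * min (κ - g ^ 2 * d / γ) (γ - g ^ 2 * d / κ)) *
          (‖A 0‖ ^ 2 + g ^ 2 / (γ * κ) * ‖S 0‖ ^ 2 +
            g ^ 2 / (4 * γ * κ) * (D 0 - d) ^ 2) := by
  intro t ht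
  set lam := min (κ - g ^ 2 * d / γ) (γ - g ^ 2 * d / κ) with hlamdef
  set V : ℝ → ℝ := fun s => ‖A s‖ ^ 2 + g^2/(γ*κ) * ‖S s‖ ^ 2
      + g^2/(γ*κ)/4 * (D s - d) ^ 2 with hVdef
  -- derivative of V
  have hVd : ∀ s ≥ (0:ℝ), HasDerivAt V
      (-(2*κ)*‖A s‖^2 - 2*γ*(g^2/(γ*κ))*‖S s‖^2
        - γ*(g^2/(γ*κ))*(D s - d)^2
        + 2*(g*(1+(g^2/(γ*κ))*d))*((starRingEnd ℂ) (A s) * S s).re) s := by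
    intro s hs
    have h1 : HasDerivAt (fun u => ‖A u‖^2)
        (-(2*κ)*‖A s‖^2 + 2*g*((starRingEnd ℂ) (A s) * S s).re) s := by
      have h := hasDerivAt_abs_sq (hA s hs)
      convert h using 1
      simp [Complex.mul_re, Complex.mul_im, Complex.sq_norm, Complex.normSq_apply]
      ring
    have h2 : HasDerivAt (fun u => ‖S u‖^2)
        (-(2*γ)*‖S s‖^2 + 2*g*(D s)*((starRingEnd ℂ) (A s) * S s).re) s := by
      have h := hasDerivAt_abs_sq (hS s hs)
      convert h using 1
      simp [Complex.mul_re, Complex.mul_im, Complex.sq_norm, Complex.normSq_apply]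
      ring
    have h3 : HasDerivAt (fun u => (D u - d)^2)
        (2*(D s - d)*(-4*g*((starRingEnd ℂ) (A s)*S s).re - 2*γ*(D s - d))) s := by
      have h := ((hD s hs).sub_const d).pow 2
      refine h.congr_deriv ?_
      push_cast
      ring
    have h := (h1.add (h2.const_mul (g^2/(γ*κ)))).add (h3.const_mul (g^2/(γ*κ)/4))
    refine h.congr_deriv ?_
    ring
  -- pointwise differential inequality
  have hVnonpos : ∀ s ≥ (0:ℝ),
      (-(2*κ)*‖A s‖^2 - 2*γ*(g^2/(γ*κ))*‖S s‖^2
        - γ*(g^2/(γ*κ))*(D s - d)^2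
        + 2*(g*(1+(g^2/(γ*κ))*d))*((starRingEnd ℂ) (A s) * S s).re) + lam * V s ≤ 0 := by
    intro s _
    have habs : |((starRingEnd ℂ) (A s) * S s).re| ≤ ‖A s‖ * ‖S s‖ := by
      calc |((starRingEnd ℂ) (A s) * S s).re| ≤ ‖(starRingEnd ℂ) (A s) * S s‖ :=
            Complex.abs_re_le_norm _
        _ = ‖A s‖ * ‖S s‖ := by
            rw [norm_mul, Complex.norm_conj]
    have hr : ((starRingEnd ℂ) (A s) * S s).re ^ 2
        ≤ ‖A s‖^2 * ‖S s‖^2 := by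
      have h2 := mul_self_le_mul_self (abs_nonneg (((starRingEnd ℂ) (A s) * S s).re)) habs
      rw [abs_mul_abs_self] at h2
      nlinarith [h2]
    have := mb_key g κ γ d (‖A s‖^2) (‖S s‖^2) (D s - d)
      (((starRingEnd ℂ) (A s) * S s).re) hκ hγ hd0 (by positivity) (by positivity) hr
    simpa [hVdef, hlamdef] using this
  -- W = V * exp(lam t) is antitone on [0, ∞)
  set W : ℝ → ℝ := fun s => V s * Real.exp (lam * s) with hWdef
  have hWd : ∀ s ≥ (0:ℝ), HasDerivAt W
      ((-(2*κ)*‖A s‖^2 - 2*γ*(g^2/(γ*κ))*‖S s‖^2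
        - γ*(g^2/(γ*κ))*(D s - d)^2
        + 2*(g*(1+(g^2/(γ*κ))*d))*((starRingEnd ℂ) (A s) * S s).re) * Real.exp (lam*s)
        + V s * (Real.exp (lam*s) * lam)) s := by
    intro s hs
    have hlin : HasDerivAt (fun u : ℝ => lam * u) lam s := by
      simpa using (hasDerivAt_id s).const_mul lam
    have hexp : HasDerivAt (fun u : ℝ => Real.exp (lam * u)) (Real.exp (lam*s) * lam) s :=
      (Real.hasDerivAt_exp (lam*s)).comp s hlin
    exact (hVd s hs).mul hexp
  have hWnonpos : ∀ s ≥ (0:ℝ),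
      (-(2*κ)*‖A s‖^2 - 2*γ*(g^2/(γ*κ))*‖S s‖^2
        - γ*(g^2/(γ*κ))*(D s - d)^2
        + 2*(g*(1+(g^2/(γ*κ))*d))*((starRingEnd ℂ) (A s) * S s).re) * Real.exp (lam*s)
        + V s * (Real.exp (lam*s) * lam) ≤ 0 := by
    intro s hs
    have h := hVnonpos s hs
    have hE : 0 < Real.exp (lam*s) := Real.exp_pos _
    nlinarith [mul_le_mul_of_nonneg_right h hE.le]
  have hWanti : AntitoneOn W (Set.Ici (0:ℝ)) := by
    apply antitoneOn_of_deriv_nonpos (convex_Ici 0)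
    · intro s hs
      exact (hWd s hs).continuousAt.continuousWithinAt
    · intro s hs
      rw [interior_Ici] at hs
      exact ((hWd s (le_of_lt hs)).differentiableAt).differentiableWithinAt
    · intro s hs
      rw [interior_Ici] at hs
      rw [(hWd s (le_of_lt hs)).deriv]
      exact hWnonpos s (le_of_lt hs)
  have hWt : W t ≤ W 0 := hWanti Set.self_mem_Ici ht ht
  have hW0 : W 0 = V 0 := by simp [hWdef]
  have hWt' : V t * Real.exp (lam * t) ≤ V 0 := by rw [hW0] at hWt; exact hWt
  have hfin : V t ≤ Real.exp (-t * lam) * V 0 := by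
    have hE : 0 < Real.exp (lam * t) := Real.exp_pos _
    rw [show (-t * lam : ℝ) = -(lam * t) by ring, Real.exp_neg]
    calc V t = (V t * Real.exp (lam*t)) * (Real.exp (lam*t))⁻¹ := by
          field_simp
      _ ≤ V 0 * (Real.exp (lam*t))⁻¹ :=
          mul_le_mul_of_nonneg_right hWt' (by positivity)
      _ = (Real.exp (lam*t))⁻¹ * V 0 := by ring
  calc ‖A t‖ ^ 2 + g ^ 2 / (γ * κ) * ‖S t‖ ^ 2 +
          g ^ 2 / (4 * γ * κ) * (D t - d) ^ 2 = V t := by rw [hVdef]; ring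
    _ ≤ Real.exp (-t * lam) * V 0 := hfin
    _ = Real.exp (-t * lam) *
          (‖A 0‖ ^ 2 + g ^ 2 / (γ * κ) * ‖S 0‖ ^ 2 +
            g ^ 2 / (4 * γ * κ) * (D 0 - d) ^ 2) := by rw [hVdef]; ring_nf
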